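/- Let n = 2^k·m with m odd. Then the n-th letter (indexed from 1) of the fixed point of the period doubling substitution x→xy, y→xx is x if k is even and y if k is odd. -/

import Mathlib

/-- The `n`-th letter (indexed from 1) of the period doubling sequence
(fixed point of `x → xy`, `y → xx`, with `x` encoded as `true` and `y` as
`false`) for `n = 2^k * m`, `m` odd, is `x` iff `k` is even. -/
theorem period_doubling_letter
    (p : ℕ → Bool)
    (hodd : ∀ i : ℕ, p (2 * i + 1) = true)
    (heven : ∀ i : ℕ, 1 ≤ i → p (2 * i) = !(p i)) :
    ∀ k m : ℕ, Odd m → (p (2 ^ k * m) = true ↔ Even k) := by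
  intro k
  induction k with
  | zero =>
    intro m hm
    obtain ⟨i, rfl⟩ := hm
    simpa using hodd i
  | succ k ih =>
    intro m hm
    have h1 : 1 ≤ 2 ^ k * m := Nat.mul_pos (Nat.pow_pos (n := k) (by norm_num)) hm.pos
    have : p (2 ^ (k + 1) * m) = !(p (2 ^ k * m)) := by
      rw [pow_succ, mul_comm (2 ^ k) 2, mul_assoc]
      exact heven _ h1
    rw [this]
    rcases Bool.eq_false_or_eq_true (p (2 ^ k * m)) with h | h
    · have hk : Even k := (ih m hm).mp h
      simp [h, Nat.even_add_one, hk]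
    · have hk : ¬ Even k := by rw [← ih m hm, h]; simp
      simp [h, Nat.even_add_one, hk]
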